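/- arXiv:2504.15854 — 3 statements merged into one kernel-verified Lean document; each statement's English description precedes it below -/
import Mathlib

section
/- If n points are sampled i.i.d. from a distribution on [0,1]^d whose density is bounded below by δ > 0, and [0,1]^d is partitioned into an ε-net of hypercubes with side ε ≥ n^{-1/(2d)}, then with probability at least 1 - √n · exp(-δ√n/8), every hypercube contains at least (δ/2)√n of the sampled points. -/
open MeasureTheory Real
open scoped Classical

open ProbabilityTheory
set_option maxHeartbeats 1000000

lemma my_integral_pi {Ω : Type*} [MeasurableSpace Ω] (μ : Measure Ω) [SigmaFinite μ]
    {n : ℕ} (f : Fin n → Ω → ℝ) :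
    ∫ x : Fin n → Ω, (∏ i, f i (x i)) ∂(Measure.pi fun _ => μ) = ∏ i, ∫ x, f i x ∂μ := by
  letI : MeasureSpace Ω := ⟨μ⟩
  exact MeasureTheory.integral_fin_nat_prod_eq_prod f

lemma my_integrable_pi {Ω : Type*} [MeasurableSpace Ω] (μ : Measure Ω) [SigmaFinite μ]
    {n : ℕ} (f : Fin n → Ω → ℝ) (hf : ∀ i, Integrable (f i) μ) :
    Integrable (fun x : Fin n → Ω => ∏ i, f i (x i)) (Measure.pi fun _ => μ) := by
  letI : MeasureSpace Ω := ⟨μ⟩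
  exact MeasureTheory.Integrable.fin_nat_prod hf

lemma my_exp_ind {Ω : Type*} (C : Set Ω) (t : ℝ) (x : Ω) :
    Real.exp (t * C.indicator (fun _ => (1:ℝ)) x)
      = 1 + C.indicator (fun _ => Real.exp t - 1) x := by
  by_cases h : x ∈ C <;> simp [Set.indicator_of_mem, Set.indicator_of_notMem, h]

lemma my_single_integrable {Ω : Type*} [MeasurableSpace Ω] (μ : Measure Ω)
    [IsFiniteMeasure μ] {C : Set Ω} (hC : MeasurableSet C) (t : ℝ) :
    Integrable (fun x => Real.exp (t * C.indicator (fun _ => (1:ℝ)) x)) μ := by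
  simp only [my_exp_ind]
  exact (integrable_const 1).add ((integrable_const (Real.exp t - 1)).indicator hC)

lemma my_single_integral {Ω : Type*} [MeasurableSpace Ω] (μ : Measure Ω)
    [IsProbabilityMeasure μ] {C : Set Ω} (hC : MeasurableSet C) (t : ℝ) :
    ∫ x, Real.exp (t * C.indicator (fun _ => (1:ℝ)) x) ∂μ
      = 1 + (Real.exp t - 1) * (μ C).toReal := by
  simp only [my_exp_ind]
  rw [integral_add (integrable_const 1) ((integrable_const (Real.exp t - 1)).indicator hC),
    integral_const, integral_indicator_const _ hC]
  simp [mul_comm, Measure.real]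

lemma my_box_bound {Ω : Type*} [MeasurableSpace Ω] (μ : Measure Ω)
    [IsProbabilityMeasure μ] (n : ℕ) {C : Set Ω} (hC : MeasurableSet C) (a : ℝ) :
    (((Measure.pi fun _ : Fin n => μ)
        {ω | (∑ i, C.indicator (fun _ => (1:ℝ)) (ω i)) ≤ a}).toReal)
      ≤ Real.exp (Real.log 2 * a) * (1 - (μ C).toReal / 2) ^ n := by
  have ht0 : -Real.log 2 ≤ 0 := neg_nonpos.mpr (Real.log_nonneg one_le_two)
  have hexp : ∀ ω : Fin n → Ω, Real.exp (-Real.log 2 * ∑ i, C.indicator (fun _ => (1:ℝ)) (ω i))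
      = ∏ i, Real.exp (-Real.log 2 * C.indicator (fun _ => (1:ℝ)) (ω i)) := by
    intro ω
    rw [Finset.mul_sum, Real.exp_sum]
  have h_int : Integrable
      (fun ω : Fin n → Ω => Real.exp (-Real.log 2 * ∑ i, C.indicator (fun _ => (1:ℝ)) (ω i)))
      (Measure.pi fun _ => μ) := by
    simp only [hexp]
    exact my_integrable_pi μ _ (fun i => my_single_integrable μ hC (-Real.log 2))
  haveI : IsProbabilityMeasure (Measure.pi fun _ : Fin n => μ) :=
    MeasureTheory.Measure.pi.instIsProbabilityMeasure _
  have hchern := @measure_le_le_exp_mul_mgf (Fin n → Ω) _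
    (fun ω => ∑ i, C.indicator (fun _ => (1:ℝ)) (ω i))
    (Measure.pi fun _ : Fin n => μ) (-Real.log 2) (by infer_instance) a ht0 h_int
  have hmgf : mgf (fun ω : Fin n → Ω => ∑ i, C.indicator (fun _ => (1:ℝ)) (ω i))
      (Measure.pi fun _ => μ) (-Real.log 2) = (1 - (μ C).toReal / 2) ^ n := by
    unfold mgf
    simp only [hexp]
    rw [my_integral_pi μ (fun _ x => Real.exp (-Real.log 2 * C.indicator (fun _ => (1:ℝ)) x)),
      Finset.prod_const, my_single_integral μ hC (-Real.log 2)]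
    have h2 : Real.exp (-Real.log 2) = 1/2 := by
      rw [Real.exp_neg, Real.exp_log two_pos]
      norm_num
    rw [h2]
    norm_num
    ring_nf
  rw [hmgf] at hchern
  calc ((Measure.pi fun _ : Fin n => μ)
        {ω | (∑ i, C.indicator (fun _ => (1:ℝ)) (ω i)) ≤ a}).toReal
      ≤ Real.exp (-(-Real.log 2) * a) * (1 - (μ C).toReal / 2) ^ n := hchern
    _ = Real.exp (Real.log 2 * a) * (1 - (μ C).toReal / 2) ^ n := by rw [neg_neg]

/-- The hypercube of the ε-net of `[0,1]^d` (side `ε = 1/k`) indexed by `b : Fin d → Fin k`. -/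
def netCube (d k : ℕ) (b : Fin d → Fin k) : Set (Fin d → ℝ) :=
  {x | ∀ j, (b j : ℝ) / k ≤ x j ∧ x j < ((b j : ℝ) + 1) / k}

/-- If `n` points are sampled i.i.d. from a distribution on `[0,1]^d` whose density is bounded
below by `δ > 0`, and `[0,1]^d` is partitioned into the ε-net of hypercubes of side
`ε = 1/k ≥ n^(-1/(2d))`, then with probability at least `1 - √n exp(-δ√n/8)` every hypercube
contains at least `(δ/2)√n` of the sampled points. -/
theorem stmt_0 (d n k : ℕ) (hd : 1 ≤ d) (hn : 1 ≤ n) (hk : 1 ≤ k)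
    (δ : ℝ) (hδ : 0 < δ)
    (μ : Measure (Fin d → ℝ)) [IsProbabilityMeasure μ]
    (hsupp : μ (Set.univ.pi fun _ : Fin d => Set.Icc (0 : ℝ) 1) = 1)
    (hdens : ∀ S : Set (Fin d → ℝ), MeasurableSet S →
      S ⊆ (Set.univ.pi fun _ : Fin d => Set.Icc (0 : ℝ) 1) →
      ENNReal.ofReal δ * volume S ≤ μ S)
    (hε : (n : ℝ) ^ (-(1 : ℝ) / (2 * d)) ≤ (1 : ℝ) / k) :
    ENNReal.ofReal (1 - Real.sqrt n * Real.exp (-(δ * Real.sqrt n / 8))) ≤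
      Measure.pi (fun _ : Fin n => μ)
        {ω | ∀ b : Fin d → Fin k,
          δ / 2 * Real.sqrt n ≤
            ((Finset.univ.filter fun i : Fin n => ω i ∈ netCube d k b).card : ℝ)} := by
  classical
  have hnet : ∀ b : Fin d → Fin k, netCube d k b
      = {x : Fin d → ℝ | ∀ j, (b j : ℝ) / k ≤ x j ∧ x j < ((b j : ℝ) + 1) / k} := fun _ => rfl
  have hn0 : (0:ℝ) < n := by exact_mod_cast hn
  have hk0 : (0:ℝ) < k := by exact_mod_cast hk
  have hd0 : (0:ℝ) < d := by exact_mod_cast hd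
  have hs0 : (0:ℝ) < Real.sqrt n := Real.sqrt_pos.mpr hn0
  -- cube as a product of intervals
  have hCeq : ∀ b, netCube d k b
      = Set.univ.pi (fun j => Set.Ico ((b j:ℝ)/k) (((b j:ℝ)+1)/k)) := by
    intro b; rw [hnet]; ext x; simp [Set.mem_pi]
  have hCmeas : ∀ b, MeasurableSet (netCube d k b) := by
    intro b
    rw [hCeq]
    exact MeasurableSet.univ_pi (fun j => measurableSet_Ico)
  have hCsub : ∀ b, netCube d k b ⊆ Set.univ.pi fun _ : Fin d => Set.Icc (0:ℝ) 1 := by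
    intro b x hx j _
    rw [hnet] at hx
    obtain ⟨h1, h2⟩ := hx j
    constructor
    · exact le_trans (by positivity) h1
    · refine le_trans h2.le ?_
      rw [div_le_one hk0]
      have : (b j : ℝ) + 1 ≤ k := by exact_mod_cast (b j).isLt
      exact this
  have hvol : ∀ b, volume (netCube d k b) = ENNReal.ofReal (((1:ℝ)/k)^d) := by
    intro b
    rw [hCeq, volume_pi_pi]
    have : ∀ j : Fin d, volume (Set.Ico ((b j:ℝ)/k) (((b j:ℝ)+1)/k))
        = ENNReal.ofReal ((1:ℝ)/k) := by
      intro j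
      rw [Real.volume_Ico]
      congr 1
      field_simp
      ring
    simp only [this, Finset.prod_const, Finset.card_univ, Fintype.card_fin]
    rw [← ENNReal.ofReal_pow (by positivity)]
  -- real power facts
  have hrd : ((n:ℝ) ^ (-(1:ℝ)/(2*d)))^d = 1/Real.sqrt n := by
    rw [← Real.rpow_natCast ((n:ℝ) ^ (-(1:ℝ)/(2*d))) d, ← Real.rpow_mul hn0.le]
    have h1 : (-(1:ℝ)/(2*d)) * d = -(1/2) := by field_simp
    rw [h1, Real.rpow_neg hn0.le, ← Real.sqrt_eq_rpow, one_div]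
  have hR1 : 1/Real.sqrt n ≤ ((1:ℝ)/k)^d := by
    rw [← hrd]
    exact pow_le_pow_left₀ (Real.rpow_nonneg hn0.le _) hε d
  have hR2 : ((k:ℝ))^d ≤ Real.sqrt n := by
    have hA0 : (0:ℝ) < (n:ℝ) ^ ((1:ℝ)/(2*d)) := Real.rpow_pos_of_pos hn0 _
    have hklA : (k:ℝ) ≤ (n:ℝ) ^ ((1:ℝ)/(2*d)) := by
      have h1 : 1/((n:ℝ) ^ ((1:ℝ)/(2*d))) ≤ 1/(k:ℝ) := by
        rw [one_div, ← Real.rpow_neg hn0.le]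
        have : -((1:ℝ)/(2*d)) = -(1:ℝ)/(2*d) := by ring
        rw [this]
        exact hε
      exact le_of_one_div_le_one_div hA0 h1
    calc ((k:ℝ))^d ≤ ((n:ℝ) ^ ((1:ℝ)/(2*d)))^d :=
          pow_le_pow_left₀ (by positivity) hklA d
      _ = Real.sqrt n := by
          rw [← Real.rpow_natCast ((n:ℝ) ^ ((1:ℝ)/(2*d))) d, ← Real.rpow_mul hn0.le]
          have h1 : ((1:ℝ)/(2*d)) * d = 1/2 := by field_simp
          rw [h1, ← Real.sqrt_eq_rpow]
  -- lower bound on box probability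
  have hp : ∀ b, δ / Real.sqrt n ≤ (μ (netCube d k b)).toReal := by
    intro b
    have h0 : ENNReal.ofReal (δ/Real.sqrt n) ≤ μ (netCube d k b) := by
      calc ENNReal.ofReal (δ/Real.sqrt n)
          = ENNReal.ofReal δ * ENNReal.ofReal (1/Real.sqrt n) := by
            rw [← ENNReal.ofReal_mul hδ.le]; congr 1; ring
        _ ≤ ENNReal.ofReal δ * ENNReal.ofReal (((1:ℝ)/k)^d) :=
            mul_le_mul_right (ENNReal.ofReal_le_ofReal hR1) _
        _ = ENNReal.ofReal δ * volume (netCube d k b) := by rw [hvol]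
        _ ≤ μ (netCube d k b) := hdens _ (hCmeas b) (hCsub b)
    exact (ENNReal.ofReal_le_iff_le_toReal (measure_ne_top μ _)).mp h0
  have hp1 : ∀ b, (μ (netCube d k b)).toReal ≤ 1 := by
    intro b
    exact ENNReal.toReal_le_of_le_ofReal zero_le_one (by simpa using prob_le_one)
  -- count as sum of indicators
  have hcard : ∀ (b : Fin d → Fin k) (ω : Fin n → (Fin d → ℝ)),
      ((Finset.univ.filter fun i : Fin n => ω i ∈ netCube d k b).card : ℝ)
        = ∑ i, (netCube d k b).indicator (fun _ => (1:ℝ)) (ω i) := by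
    intro b ω
    rw [Finset.card_filter]
    push_cast
    exact Finset.sum_congr rfl fun i _ => by
      by_cases h : ω i ∈ netCube d k b <;> simp [h]
  have hX : ∀ b : Fin d → Fin k, Measurable
      (fun ω : Fin n → (Fin d → ℝ) => ∑ i, (netCube d k b).indicator (fun _ => (1:ℝ)) (ω i)) := by
    intro b
    exact Finset.measurable_sum _ (fun i _ =>
      (measurable_const.indicator (hCmeas b)).comp (measurable_pi_apply i))
  set a : ℝ := δ / 2 * Real.sqrt n with ha
  set G : Set (Fin n → (Fin d → ℝ)) :=
    {ω | ∀ b : Fin d → Fin k,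
      a ≤ ∑ i, (netCube d k b).indicator (fun _ => (1:ℝ)) (ω i)} with hG
  have hGmeas : MeasurableSet G := by
    rw [hG, Set.setOf_forall]
    exact MeasurableSet.iInter (fun b => measurableSet_le measurable_const (hX b))
  set Pm := Measure.pi (fun _ : Fin n => μ) with hPm
  haveI : IsProbabilityMeasure Pm := Measure.pi.instIsProbabilityMeasure _
  -- per-box bound in ENNReal
  have hbox : ∀ b : Fin d → Fin k,
      Pm {ω | (∑ i, (netCube d k b).indicator (fun _ => (1:ℝ)) (ω i)) ≤ a}
        ≤ ENNReal.ofReal (Real.exp (-(δ * Real.sqrt n / 8))) := by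
    intro b
    have h1 := my_box_bound μ n (hCmeas b) a
    set p : ℝ := (μ (netCube d k b)).toReal with hpdef
    have hp0 : 0 ≤ p := ENNReal.toReal_nonneg
    have hnp : δ * Real.sqrt n ≤ n * p := by
      have h2 : (n:ℝ) * (δ / Real.sqrt n) ≤ n * p :=
        mul_le_mul_of_nonneg_left (hp b) hn0.le
      have h3 : (n:ℝ) * (δ / Real.sqrt n) = δ * Real.sqrt n := by
        have hss : Real.sqrt n * Real.sqrt n = (n:ℝ) := Real.mul_self_sqrt hn0.le
        field_simp
        nlinarith [hss]
      linarith
    have h2 : Real.exp (Real.log 2 * a) * (1 - p/2)^n ≤ Real.exp (-(δ * Real.sqrt n / 8)) := by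
      have hb1 : (1 - p/2)^n ≤ Real.exp (-(p/2)) ^ n := by
        apply pow_le_pow_left₀ (by nlinarith [hp1 b])
        nlinarith [Real.add_one_le_exp (-(p/2))]
      have hb2 : Real.exp (-(p/2)) ^ n = Real.exp (n * (-(p/2))) := by
        rw [← Real.exp_nat_mul]
      calc Real.exp (Real.log 2 * a) * (1 - p/2)^n
          ≤ Real.exp (Real.log 2 * a) * Real.exp (n * (-(p/2))) := by
            rw [← hb2]; exact mul_le_mul_of_nonneg_left hb1 (Real.exp_nonneg _)
        _ = Real.exp (Real.log 2 * a + n * (-(p/2))) := by rw [← Real.exp_add]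
        _ ≤ Real.exp (-(δ * Real.sqrt n / 8)) := by
            apply Real.exp_le_exp.mpr
            have hlog : Real.log 2 < 0.6931471808 := Real.log_two_lt_d9
            have hm0 : 0 ≤ δ * Real.sqrt n := by positivity
            rw [ha]
            nlinarith
    calc Pm {ω | (∑ i, (netCube d k b).indicator (fun _ => (1:ℝ)) (ω i)) ≤ a}
        = ENNReal.ofReal ((Pm {ω | (∑ i, (netCube d k b).indicator
            (fun _ => (1:ℝ)) (ω i)) ≤ a}).toReal) := by
          rw [ENNReal.ofReal_toReal (measure_ne_top Pm _)]
      _ ≤ ENNReal.ofReal (Real.exp (-(δ * Real.sqrt n / 8))) :=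
          ENNReal.ofReal_le_ofReal (le_trans h1 h2)
  -- union bound
  have hcompl : Gᶜ ⊆ ⋃ b : Fin d → Fin k,
      {ω | (∑ i, (netCube d k b).indicator (fun _ => (1:ℝ)) (ω i)) ≤ a} := by
    intro ω hω
    rw [hG] at hω
    simp only [Set.mem_compl_iff, Set.mem_setOf_eq, not_forall, not_le] at hω
    obtain ⟨b, hb⟩ := hω
    exact Set.mem_iUnion.mpr ⟨b, hb.le⟩
  have hbad : Pm Gᶜ ≤ ENNReal.ofReal (Real.sqrt n * Real.exp (-(δ * Real.sqrt n / 8))) := by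
    calc Pm Gᶜ ≤ Pm (⋃ b : Fin d → Fin k,
          {ω | (∑ i, (netCube d k b).indicator (fun _ => (1:ℝ)) (ω i)) ≤ a}) :=
          measure_mono hcompl
      _ ≤ ∑' b : Fin d → Fin k,
          Pm {ω | (∑ i, (netCube d k b).indicator (fun _ => (1:ℝ)) (ω i)) ≤ a} :=
          measure_iUnion_le _
      _ = ∑ b : Fin d → Fin k,
          Pm {ω | (∑ i, (netCube d k b).indicator (fun _ => (1:ℝ)) (ω i)) ≤ a} := tsum_fintype _
      _ ≤ ∑ _b : Fin d → Fin k, ENNReal.ofReal (Real.exp (-(δ * Real.sqrt n / 8))) :=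
          Finset.sum_le_sum (fun b _ => hbox b)
      _ = (Fintype.card (Fin d → Fin k)) * ENNReal.ofReal (Real.exp (-(δ * Real.sqrt n / 8))) := by
          rw [Finset.sum_const, Finset.card_univ, nsmul_eq_mul]
      _ = ENNReal.ofReal ((k^d : ℝ) * Real.exp (-(δ * Real.sqrt n / 8))) := by
          rw [ENNReal.ofReal_mul (by positivity)]
          congr 1
          rw [Fintype.card_fun]
          simp [ENNReal.ofReal_pow hk0.le]
      _ ≤ ENNReal.ofReal (Real.sqrt n * Real.exp (-(δ * Real.sqrt n / 8))) :=
          ENNReal.ofReal_le_ofReal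
            (mul_le_mul_of_nonneg_right hR2 (Real.exp_nonneg _))
  -- conclude
  have hfin : ENNReal.ofReal (1 - Real.sqrt n * Real.exp (-(δ * Real.sqrt n / 8))) ≤ Pm G := by
    calc ENNReal.ofReal (1 - Real.sqrt n * Real.exp (-(δ * Real.sqrt n / 8)))
        = 1 - ENNReal.ofReal (Real.sqrt n * Real.exp (-(δ * Real.sqrt n / 8))) := by
          rw [ENNReal.ofReal_sub _ (by positivity), ENNReal.ofReal_one]
      _ ≤ 1 - Pm Gᶜ := tsub_le_tsub_left hbad 1
      _ = Pm G := by
          rw [← prob_compl_eq_one_sub hGmeas.compl, compl_compl]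
  have hsetEq : {ω : Fin n → (Fin d → ℝ) | ∀ b : Fin d → Fin k,
      δ / 2 * Real.sqrt n ≤
        ((Finset.univ.filter fun i : Fin n => ω i ∈ netCube d k b).card : ℝ)} = G := by
    ext ω
    simp only [hG, Set.mem_setOf_eq]
    refine forall_congr' fun b => ?_
    rw [hcard b ω, ha]
  rw [hsetEq]
  exact hfin
end

section
/- Lower bound on (ℓ−1)-clustering error: let μ_0 < ... < μ_{ℓ-1} with gaps at least κ, and let a_1, ..., a_N be real numbers such that for each level c, at least M of the a_j satisfy |a_j − μ_c| ≤ η, where η < κ/2. Then for any ℓ−1 centers θ_0,...,θ_{ℓ-2}, the total squared error Σ_j min_i (a_j − θ_i)² is at least M (κ/2 − η)². -/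
open Finset

/-- Lower bound on the (ℓ-1)-clustering error: if the level means `μ 0 < … < μ (ℓ-1)` have
consecutive gaps at least `κ`, and for every level `c` at least `M` of the data points `a j`
lie within `η < κ/2` of `μ c`, then any `ℓ - 1` centers incur total squared error at least
`M (κ/2 - η)²`. -/
theorem stmt_6 (ℓ : ℕ) (hℓ : 2 ≤ ℓ) (κ η : ℝ) (hκ : 0 < κ) (hη : 0 ≤ η) (hηκ : η < κ / 2)
    (μ : ℕ → ℝ) (hgap : ∀ i, i + 1 < ℓ → μ i + κ ≤ μ (i + 1))
    (N M : ℕ) (a : Fin N → ℝ)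
    (hM : ∀ c < ℓ, M ≤ (Finset.univ.filter (fun j => |a j - μ c| ≤ η)).card)
    (θ : Fin (ℓ - 1) → ℝ) :
    (M : ℝ) * (κ / 2 - η) ^ 2 ≤ ∑ j, ⨅ i : Fin (ℓ - 1), (a j - θ i) ^ 2 := by
  classical
  haveI hne : Nonempty (Fin (ℓ - 1)) := ⟨⟨0, by omega⟩⟩
  -- separation of the means
  have hmono : ∀ c' c, c < c' → c' < ℓ → μ c + κ ≤ μ c' := by
    intro c'
    induction c' with
    | zero => intro c h; omega
    | succ d ih =>
      intro c h h'
      rcases Nat.lt_succ_iff_lt_or_eq.mp h with h1 | h1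
      · have h2 := hgap d h'
        have h3 := ih c h1 (by omega)
        linarith
      · subst h1; exact hgap c h'
  -- pigeonhole: some mean has no center within κ/2
  obtain ⟨c, hcℓ, hc⟩ : ∃ c, c < ℓ ∧ ∀ i, κ / 2 ≤ |θ i - μ c| := by
    by_contra h
    push_neg at h
    choose g hg using h
    have hinj : Function.Injective (fun x : Fin ℓ => g x.1 x.2) := by
      intro x y hxy
      by_contra hne'
      have hxy1 : (x : ℕ) ≠ (y : ℕ) := fun he => hne' (Fin.ext he)
      simp only at hxy
      rcases lt_or_gt_of_ne hxy1 with hlt | hlt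
      · have h1 := hg x.1 x.2
        have h2 := hg y.1 y.2
        rw [hxy] at h1
        have h3 := hmono y.1 x.1 hlt y.2
        have h4 := abs_lt.mp h1
        have h5 := abs_lt.mp h2
        linarith
      · have h1 := hg x.1 x.2
        have h2 := hg y.1 y.2
        rw [hxy] at h1
        have h3 := hmono x.1 y.1 hlt x.2
        have h4 := abs_lt.mp h1
        have h5 := abs_lt.mp h2
        linarith
    have := Fintype.card_le_of_injective _ hinj
    simp only [Fintype.card_fin] at this
    omega
  -- pointwise bound on selected points
  have hκη : (0:ℝ) ≤ κ / 2 - η := by linarith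
  have hkey : ∀ j, |a j - μ c| ≤ η →
      (κ / 2 - η) ^ 2 ≤ ⨅ i : Fin (ℓ - 1), (a j - θ i) ^ 2 := by
    intro j hj
    apply le_ciInf
    intro i
    have h1 : κ / 2 - η ≤ |a j - θ i| := by
      have h2 := abs_sub_le (θ i) (a j) (μ c)
      have h3 := hc i
      rw [abs_sub_comm (θ i) (a j)] at h2
      linarith
    calc (κ / 2 - η) ^ 2 ≤ |a j - θ i| ^ 2 := by
          apply pow_le_pow_left₀ hκη h1
      _ = (a j - θ i) ^ 2 := sq_abs _
  have hnonneg : ∀ j : Fin N, (0:ℝ) ≤ ⨅ i : Fin (ℓ - 1), (a j - θ i) ^ 2 :=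
    fun j => le_ciInf fun i => sq_nonneg _
  set s := Finset.univ.filter (fun j : Fin N => |a j - μ c| ≤ η) with hs
  calc (M : ℝ) * (κ / 2 - η) ^ 2
      ≤ (s.card : ℝ) * (κ / 2 - η) ^ 2 := by
        apply mul_le_mul_of_nonneg_right _ (by positivity)
        exact_mod_cast hM c hcℓ
    _ ≤ ∑ j ∈ s, ⨅ i : Fin (ℓ - 1), (a j - θ i) ^ 2 := by
        have h := Finset.card_nsmul_le_sum s
          (fun j => ⨅ i : Fin (ℓ - 1), (a j - θ i) ^ 2) ((κ / 2 - η) ^ 2)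
          (fun j hj => hkey j (by simpa [hs] using hj))
        simpa [nsmul_eq_mul, mul_comm] using h
    _ ≤ ∑ j, ⨅ i : Fin (ℓ - 1), (a j - θ i) ^ 2 :=
        Finset.sum_le_sum_of_subset_of_nonneg (Finset.filter_subset _ _)
          (fun j _ _ => hnonneg j)
end

section
/- In an optimal (minimum squared error) assignment-based ℓ-clustering of reals a_1,...,a_N, if for level c at least M points lie within η of μ_c where the μ_c are κ-separated (κ > 4η) and the optimal clustering error is strictly less than M(κ/4 − η)², then some center lies in [μ_c − κ/4, μ_c + κ/4]. -/
open Finset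

/-- If for level `c` at least `M` data points lie within `η` of the level mean `μ c`, the level
means are `κ`-separated with `κ > 4η`, and the clustering error of the centers `Θ` is strictly
less than `M (κ/4 - η)²`, then some center lies in `[μ c - κ/4, μ c + κ/4]`. -/
theorem stmt_12 (ℓ : ℕ) (κ η : ℝ) (hκ : 0 < κ) (hη : 0 ≤ η) (hηκ : 4 * η < κ)
    (μ : ℕ → ℝ) (hgap : ∀ i, i + 1 < ℓ → μ i + κ ≤ μ (i + 1))
    (c : ℕ) (hc : c < ℓ)
    (N M : ℕ) (a : Fin N → ℝ)
    (hM : M ≤ (Finset.univ.filter (fun j => |a j - μ c| ≤ η)).card)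
    (Θ : Finset ℝ) (hΘ : Θ.Nonempty)
    (herr : ∑ j, Θ.inf' hΘ (fun θ => (a j - θ) ^ 2) < (M : ℝ) * (κ / 4 - η) ^ 2) :
    ∃ θ ∈ Θ, θ ∈ Set.Icc (μ c - κ / 4) (μ c + κ / 4) := by
  by_contra h
  push_neg at h
  set S := Finset.univ.filter (fun j => |a j - μ c| ≤ η) with hS
  have hbound : ∀ j ∈ S, (κ / 4 - η) ^ 2 ≤ Θ.inf' hΘ (fun θ => (a j - θ) ^ 2) := by
    intro j hj
    rw [Finset.le_inf'_iff]
    intro θ hθ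
    have hfar : κ / 4 < |θ - μ c| := by
      have := h θ hθ
      rw [Set.mem_Icc] at this
      rcases lt_or_ge θ (μ c - κ / 4) with h1 | h1
      · rw [abs_sub_comm, lt_abs]; left; linarith
      · have h2 : μ c + κ / 4 < θ := by
          by_contra h2; push_neg at h2; exact this ⟨h1, h2⟩
        rw [lt_abs]; left; linarith
    have hnear : |a j - μ c| ≤ η := by
      simp only [hS, Finset.mem_filter] at hj; exact hj.2
    have h1 : κ / 4 - η ≤ |a j - θ| := by
      have := abs_sub_abs_le_abs_sub (θ - μ c) (θ - a j)
      have h2 : |θ - a j| = |a j - θ| := abs_sub_comm _ _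
      have h3 : |(θ - μ c) - (θ - a j)| = |a j - μ c| := by
        rw [show (θ - μ c) - (θ - a j) = a j - μ c by ring]
      linarith [abs_sub_abs_le_abs_sub (θ - μ c) (θ - a j), h3 ▸ this]
    calc (κ / 4 - η) ^ 2 ≤ |a j - θ| ^ 2 := by
          apply pow_le_pow_left₀ (by linarith) h1
      _ = (a j - θ) ^ 2 := sq_abs _
  have hsum : (M : ℝ) * (κ / 4 - η) ^ 2 ≤ ∑ j ∈ S, Θ.inf' hΘ (fun θ => (a j - θ) ^ 2) := by
    calc (M : ℝ) * (κ / 4 - η) ^ 2 ≤ (S.card : ℝ) * (κ / 4 - η) ^ 2 := by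
          apply mul_le_mul_of_nonneg_right (by exact_mod_cast hM) (sq_nonneg _)
      _ = ∑ _j ∈ S, (κ / 4 - η) ^ 2 := by rw [Finset.sum_const, nsmul_eq_mul]
      _ ≤ _ := Finset.sum_le_sum hbound
  have hsub : ∑ j ∈ S, Θ.inf' hΘ (fun θ => (a j - θ) ^ 2) ≤
      ∑ j, Θ.inf' hΘ (fun θ => (a j - θ) ^ 2) := by
    apply Finset.sum_le_sum_of_subset_of_nonneg (Finset.subset_univ S)
    intro j _ _
    exact Finset.le_inf' hΘ _ (fun θ _ => sq_nonneg _)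
  linarith
end
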